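/- Define μ k for k ≥ 1 by: μ 1 = μ 2 = 1, μ k = r^k if k = kᵢ (where k₁ = 3 and k_{i+1} = kᵢ * ⌈log(i+2)⌉), μ k = r^{kᵢ - 1} if kᵢ < k < k_{i+1}, with fixed r ≥ 4; and let M k := (1/k!) ∏_{j=1}^k μ j. Then M j * M k ≤ M 1 * M (j + k − 1) for all j, k ≥ 1. -/

import Mathlib

open scoped Classical

/-- The index sequence: `k₁ = 3`, `k_{i+1} = kᵢ * ⌈log (i+2)⌉` (0-based: `kseq i = k_{i+1}`). -/
noncomputable def kseq : ℕ → ℕ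
  | 0 => 3
  | (i + 1) => kseq i * ⌈Real.log ((i : ℝ) + 3)⌉₊


lemma log_ceil_ge (i : ℕ) : 2 ≤ ⌈Real.log ((i : ℝ) + 3)⌉₊ := by
  have h3 : (0:ℝ) < (i:ℝ) + 3 := by positivity
  have : (1:ℝ) < Real.log ((i:ℝ) + 3) := by
    rw [Real.lt_log_iff_exp_lt h3]
    have := Real.exp_one_lt_d9
    have hi : (0:ℝ) ≤ (i:ℝ) := Nat.cast_nonneg i
    nlinarith
  have := Nat.lt_ceil.2 (show ((1:ℕ):ℝ) < Real.log ((i:ℝ)+3) by exact_mod_cast this)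
  omega

lemma log_ceil_le (i : ℕ) : ⌈Real.log ((i : ℝ) + 3)⌉₊ ≤ i + 2 := by
  rw [Nat.ceil_le]
  have h3 : (0:ℝ) < (i:ℝ) + 3 := by positivity
  have := Real.log_le_sub_one_of_pos h3
  push_cast
  linarith

lemma kseq_ge3 (i : ℕ) : 3 ≤ kseq i := by
  induction i with
  | zero => simp [kseq]
  | succ n ih =>
    have := log_ceil_ge n
    calc 3 ≤ kseq n := ih
    _ ≤ kseq n * ⌈Real.log ((n : ℝ) + 3)⌉₊ := Nat.le_mul_of_pos_right _ (by omega)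
    _ = kseq (n+1) := rfl

lemma kseq_double (i : ℕ) : 2 * kseq i ≤ kseq (i + 1) := by
  have := log_ceil_ge i
  have : kseq i * 2 ≤ kseq i * ⌈Real.log ((i : ℝ) + 3)⌉₊ := Nat.mul_le_mul_left _ this
  show 2 * kseq i ≤ kseq i * ⌈Real.log ((i : ℝ) + 3)⌉₊
  omega

lemma kseq_lt_succ (i : ℕ) : kseq i < kseq (i + 1) := by
  have := kseq_double i
  have := kseq_ge3 i
  omega

lemma kseq_strictMono : StrictMono kseq := strictMono_nat_of_lt_succ kseq_lt_succ

lemma kseq_ge_pow (i : ℕ) : 3 * 2 ^ i ≤ kseq i := by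
  induction i with
  | zero => simp [kseq]
  | succ n ih =>
    have := kseq_double n
    have : 2 * (3 * 2 ^ n) ≤ 2 * kseq n := by omega
    calc 3 * 2 ^ (n+1) = 2 * (3 * 2 ^ n) := by ring
    _ ≤ 2 * kseq n := this
    _ ≤ kseq (n+1) := kseq_double n

lemma ceil_log3 : ⌈Real.log (((0:ℕ):ℝ) + 3)⌉₊ = 2 :=
  le_antisymm (log_ceil_le 0) (log_ceil_ge 0)

lemma ceil_log4 : ⌈Real.log (((1:ℕ):ℝ) + 3)⌉₊ = 2 := by
  have h := log_ceil_ge 1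
  have h2 : ⌈Real.log (((1:ℕ):ℝ) + 3)⌉₊ ≤ 2 := by
    rw [Nat.ceil_le]
    have he : (2:ℝ) ≤ Real.exp 1 := by
      have := Real.add_one_le_exp 1; linarith
    have h4 : (4:ℝ) ≤ Real.exp 2 := by
      have : Real.exp 2 = Real.exp 1 * Real.exp 1 := by
        rw [← Real.exp_add]; norm_num
      nlinarith
    have : Real.log ((1:ℕ)+3 : ℝ) ≤ Real.log (Real.exp 2) := by
      apply Real.log_le_log (by norm_num)
      push_cast; linarith
    rw [Real.log_exp] at this
    push_cast at this ⊢; linarith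
  omega

lemma kseq_one : kseq 1 = 6 := by
  show kseq 0 * ⌈Real.log (((0:ℕ):ℝ) + 3)⌉₊ = 6
  rw [ceil_log3]; rfl

lemma kseq_two : kseq 2 = 12 := by
  show kseq 1 * ⌈Real.log (((1:ℕ):ℝ) + 3)⌉₊ = 12
  rw [kseq_one, ceil_log4]

lemma kseq_quad (i : ℕ) (hi : 1 ≤ i) : 2 * kseq (i+1) + 3 * kseq i ≤ kseq i ^ 2 + 10 := by
  rcases Nat.lt_or_ge i 2 with h | h
  · interval_cases i
    · rw [kseq_one, kseq_two]; norm_num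
  · have hc : ⌈Real.log ((i : ℝ) + 3)⌉₊ ≤ i + 2 := log_ceil_le i
    have hp : 3 * 2 ^ i ≤ kseq i := kseq_ge_pow i
    have hpow : ∀ m : ℕ, 2 ≤ m → 2 * m + 7 ≤ 3 * 2 ^ m := by
      intro m hm
      induction m with
      | zero => omega
      | succ n ih =>
        rcases Nat.lt_or_ge n 2 with h2 | h2
        · interval_cases n
          · exact absurd hm (by omega)
          · norm_num
        · have h3 := ih h2
          have h4 : 2 ^ (n+1) = 2 * 2 ^ n := by ring
          omega
    have hpow := hpow i h
    have hstep : kseq (i+1) = kseq i * ⌈Real.log ((i : ℝ) + 3)⌉₊ := rfl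
    have h1 : 2 * kseq (i+1) + 3 * kseq i ≤ (2 * (i+2) + 3) * kseq i := by
      rw [hstep]
      have : kseq i * ⌈Real.log ((i : ℝ) + 3)⌉₊ ≤ kseq i * (i+2) := Nat.mul_le_mul_left _ hc
      nlinarith
    have h2 : (2 * (i+2) + 3) * kseq i ≤ kseq i * kseq i := by
      apply Nat.mul_le_mul_right
      omega
    calc 2 * kseq (i+1) + 3 * kseq i ≤ (2*(i+2)+3) * kseq i := h1
    _ ≤ kseq i * kseq i := h2
    _ ≤ kseq i ^ 2 + 10 := by nlinarith

/-- The largest member of the index sequence that is `≤ k`. -/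
noncomputable def prevIdx (k : ℕ) : ℕ :=
  Nat.findGreatest (fun m => ∃ i, kseq i = m) k

/-- The quotient sequence `μ`. -/
noncomputable def mu (r : ℝ) (k : ℕ) : ℝ :=
  if k ≤ 2 then 1
  else if ∃ i, kseq i = k then r ^ k
  else r ^ (prevIdx k - 1)

/-- The weight sequence `M k = (1/k!) ∏_{j=1}^k μ j`. -/
noncomputable def Mseq (r : ℝ) (k : ℕ) : ℝ :=
  (1 / k.factorial) * ∏ j ∈ Finset.Icc 1 k, mu r j


lemma prevIdx_le (k : ℕ) : prevIdx k ≤ k := Nat.findGreatest_le k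

lemma prevIdx_ge3 {k : ℕ} (hk : 3 ≤ k) : 3 ≤ prevIdx k :=
  Nat.le_findGreatest hk (⟨0, rfl⟩ : ∃ i, kseq i = 3)

lemma prevIdx_mem {k : ℕ} (hk : 3 ≤ k) : ∃ i, kseq i = prevIdx k := by
  unfold prevIdx
  exact Nat.findGreatest_spec (P := fun m => ∃ i, kseq i = m) hk (⟨0, rfl⟩ : ∃ i, kseq i = 3)

lemma prevIdx_greatest {k m : ℕ} (h1 : prevIdx k < m) (h2 : m ≤ k) : ¬ ∃ i, kseq i = m :=
  Nat.findGreatest_is_greatest h1 h2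

lemma kseq_eq_three_or_ge_six {m : ℕ} (h : ∃ i, kseq i = m) : m = 3 ∨ 6 ≤ m := by
  obtain ⟨i, rfl⟩ := h
  cases i with
  | zero => left; rfl
  | succ n =>
    right
    have h1 : kseq 0 < kseq (n+1) := kseq_strictMono (Nat.succ_pos n)
    have h2 := kseq_double n
    have h3 := kseq_ge3 n
    omega

lemma not_mem_four : ¬ ∃ i, kseq i = 4 := fun h => by rcases kseq_eq_three_or_ge_six h with h | h <;> omega
lemma not_mem_five : ¬ ∃ i, kseq i = 5 := fun h => by rcases kseq_eq_three_or_ge_six h with h | h <;> omega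

lemma prevIdx_four : prevIdx 4 = 3 := by
  have h1 := prevIdx_ge3 (show 3 ≤ 4 by omega)
  have h2 := prevIdx_le 4
  rcases Nat.lt_or_ge (prevIdx 4) 4 with h | h
  · omega
  · exfalso; exact not_mem_four (by
      have : prevIdx 4 = 4 := by omega
      exact this ▸ prevIdx_mem (by omega))

lemma prevIdx_five : prevIdx 5 = 3 := by
  have h1 := prevIdx_ge3 (show 3 ≤ 5 by omega)
  have h2 := prevIdx_le 5
  have hm := prevIdx_mem (show 3 ≤ 5 by omega)
  rcases kseq_eq_three_or_ge_six hm with h | h <;> omega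

noncomputable def fexp (l : ℕ) : ℕ :=
  if l ≤ 2 then 0 else if ∃ i, kseq i = l then l else prevIdx l - 1



lemma mu_eq (r : ℝ) (k : ℕ) : mu r k = r ^ fexp k := by
  unfold mu fexp
  split_ifs with h1 h2 <;> simp

noncomputable def ee (n : ℕ) : ℕ := ∑ l ∈ Finset.Icc 1 n, fexp l

lemma Mval (r : ℝ) (n : ℕ) : Mseq r n = r ^ ee n / n.factorial := by
  unfold Mseq ee
  rw [one_div, inv_mul_eq_div]
  congr 1
  rw [← Finset.prod_pow_eq_pow_sum]
  exact Finset.prod_congr rfl fun l _ => mu_eq r l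

lemma Mpos {r : ℝ} (hr : 0 < r) (n : ℕ) : 0 < Mseq r n := by
  rw [Mval]
  have : (0:ℝ) < n.factorial := by exact_mod_cast n.factorial_pos
  positivity

lemma fexp_le (l : ℕ) : fexp l ≤ l := by
  unfold fexp
  split_ifs with h1 h2
  · omega
  · exact le_rfl
  · have := prevIdx_le l; omega

lemma fexp_two : fexp 2 = 0 := by unfold fexp; simp

lemma fexp_three : fexp 3 = 3 := by
  unfold fexp
  rw [if_neg (by omega), if_pos ⟨0, rfl⟩]

lemma fexp_four : fexp 4 = 2 := by
  unfold fexp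
  rw [if_neg (by omega), if_neg not_mem_four, prevIdx_four]

lemma fexp_five : fexp 5 = 2 := by
  unfold fexp
  rw [if_neg (by omega), if_neg not_mem_five, prevIdx_five]

lemma fexp_six : fexp 6 = 6 := by
  unfold fexp
  rw [if_neg (by omega), if_pos ⟨1, kseq_one⟩]

lemma ee_two : ee 2 = 0 := by
  unfold ee
  rw [show Finset.Icc 1 2 = {1, 2} from rfl]
  simp [fexp, fexp_two]

lemma ee_succ (n : ℕ) (h : 1 ≤ n) : ee (n+1) = ee n + fexp (n+1) := by
  unfold ee
  rw [Finset.sum_Icc_succ_top (by omega)]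

lemma ee_three : ee 3 = 3 := by rw [ee_succ 2 (by omega), ee_two, fexp_three]
lemma ee_four : ee 4 = 5 := by rw [ee_succ 3 (by omega), ee_three, fexp_four]
lemma ee_five : ee 5 = 7 := by rw [ee_succ 4 (by omega), ee_four, fexp_five]
lemma ee_six : ee 6 = 13 := by rw [ee_succ 5 (by omega), ee_five, fexp_six]

lemma fexp_of_mem {l : ℕ} (h3 : 3 ≤ l) (h : ∃ i, kseq i = l) : fexp l = l := by
  unfold fexp; rw [if_neg (by omega), if_pos h]

lemma fexp_of_not_mem {l : ℕ} (h3 : 3 ≤ l) (h : ¬ ∃ i, kseq i = l) : fexp l = prevIdx l - 1 := by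
  unfold fexp; rw [if_neg (by omega), if_neg h]

lemma prevIdx_ge {m l : ℕ} (h : m ≤ l) (hm : ∃ i, kseq i = m) : m ≤ prevIdx l := by
  unfold prevIdx
  exact Nat.le_findGreatest h hm

lemma sum_Icc_id (n : ℕ) : 2 * ∑ l ∈ Finset.Icc 1 n, l = n * (n+1) := by
  induction n with
  | zero => simp
  | succ m ih =>
    rw [Finset.sum_Icc_succ_top (by omega)]
    ring_nf
    ring_nf at ih
    omega

/-- members of the sequence below `p = kseq i` are at most `p/2` -/
lemma half_of_mem_lt {p m : ℕ} {i : ℕ} (hi : kseq i = p) (hm : ∃ j, kseq j = m) (hlt : m < p) :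
    2 * m ≤ p := by
  obtain ⟨j, rfl⟩ := hm
  have hj : j < i := by
    by_contra h
    have : kseq i ≤ kseq j := kseq_strictMono.monotone (by omega)
    omega
  have h1 : 2 * kseq j ≤ kseq (j+1) := kseq_double j
  have h2 : kseq (j+1) ≤ kseq i := kseq_strictMono.monotone (by omega)
  omega

lemma key (n : ℕ) (h3 : 3 ≤ n) (h4 : n ≠ 4) : ee n + (n - 2) ≤ (n - 1) * fexp (n+1) := by
  by_cases hA : ∃ i, kseq i = n + 1
  · -- n+1 in the sequence
    rw [fexp_of_mem (by omega) hA]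
    have hb : ee n ≤ ∑ l ∈ Finset.Icc 1 n, l := Finset.sum_le_sum (fun l _ => fexp_le l)
    have hg := sum_Icc_id n
    obtain ⟨m, rfl⟩ : ∃ m, n = m + 3 := ⟨n - 3, by omega⟩
    have e1 : m + 3 - 2 = m + 1 := by omega
    have e2 : m + 3 - 1 = m + 2 := by omega
    rw [e1, e2]
    nlinarith [hb, hg]
  · -- n+1 not in the sequence
    have hn3 : 3 ≤ n + 1 := by omega
    obtain ⟨i, hi'⟩ := prevIdx_mem hn3
    set p := prevIdx (n+1) with hp
    clear_value p
    have hi : kseq i = p := hi'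
    have hple : p ≤ n + 1 := by rw [hp]; exact prevIdx_le _
    have hpne : p ≠ n + 1 := fun h => hA (h ▸ ⟨i, hi⟩)
    have hpn : p ≤ n := by omega
    have hp3 : 3 ≤ p := by rw [hp]; exact prevIdx_ge3 hn3
    have hfn : fexp (n+1) = p - 1 := by rw [hp]; exact fexp_of_not_mem (by omega) hA
    have hnext : n + 2 ≤ kseq (i+1) := by
      by_contra h
      have h1 : kseq (i+1) ≤ n + 1 := by omega
      have h2 : prevIdx (n+1) < kseq (i+1) := by
        have := kseq_lt_succ i; omega
      exact prevIdx_greatest h2 h1 ⟨i+1, rfl⟩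
    rcases kseq_eq_three_or_ge_six ⟨i, hi⟩ with hp6 | hp6
    · -- p = 3, so i = 0 and n = 3
      have hi0 : i = 0 := by
        by_contra h
        have : kseq 1 ≤ kseq i := kseq_strictMono.monotone (by omega)
        rw [kseq_one] at this; omega
      rw [hi0, kseq_one] at hnext
      have hn : n = 3 := by omega
      subst hn
      rw [hfn, hp6, ee_three]
    · -- p ≥ 6
      have hi1 : 1 ≤ i := by
        by_contra h
        have : i = 0 := by omega
        rw [this] at hi
        have : kseq 0 = 3 := rfl
        omega
      have hquad := kseq_quad i hi1
      rw [hi] at hquad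
      have h2n : 2 * n + 3 * p ≤ p ^ 2 + 6 := by omega
      obtain ⟨q, hq⟩ : ∃ q, p = q + 1 := ⟨p - 1, by omega⟩
      subst hq
      have hq5 : 5 ≤ q := by omega
      have hsplit : ee n = (∑ l ∈ Finset.Ioc 2 q, fexp l) + fexp (q+1)
          + ∑ l ∈ Finset.Ioc (q+1) n, fexp l := by
        unfold ee
        rw [show Finset.Icc 1 n = Finset.Ioc 0 n from Finset.Icc_add_one_left_eq_Ioc (a := 0) (b := n)]
        rw [← Finset.sum_Ioc_consecutive _ (show 0 ≤ q+1 by omega) (show q+1 ≤ n by omega)]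
        rw [← Finset.sum_Ioc_consecutive _ (show 0 ≤ q by omega) (show q ≤ q+1 by omega)]
        rw [← Finset.sum_Ioc_consecutive _ (show 0 ≤ 2 by omega) (show 2 ≤ q by omega)]
        rw [Nat.Ioc_succ_singleton, Finset.sum_singleton]
        have h02 : ∑ l ∈ Finset.Ioc 0 2, fexp l = 0 := by
          have h2' : ee 2 = 0 := ee_two
          unfold ee at h2'
          rwa [show Finset.Icc 1 2 = Finset.Ioc 0 2 from Finset.Icc_add_one_left_eq_Ioc (a := 0) (b := 2)] at h2'
        omega
      have hApart : 2 * ∑ l ∈ Finset.Ioc 2 q, fexp l ≤ (q - 2) * (q + 1) := by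
        have hb : ∀ l ∈ Finset.Ioc 2 q, 2 * fexp l ≤ q + 1 := by
          intro l hl
          rw [Finset.mem_Ioc] at hl
          by_cases hm : ∃ j, kseq j = l
          · rw [fexp_of_mem (by omega) hm]
            exact half_of_mem_lt hi hm (by omega)
          · rw [fexp_of_not_mem (by omega) hm]
            have hpl := prevIdx_mem (show 3 ≤ l by omega)
            have h1 : prevIdx l ≤ l := prevIdx_le l
            have := half_of_mem_lt hi hpl (by omega)
            omega
        calc 2 * ∑ l ∈ Finset.Ioc 2 q, fexp l = ∑ l ∈ Finset.Ioc 2 q, 2 * fexp l := by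
              rw [Finset.mul_sum]
        _ ≤ ∑ l ∈ Finset.Ioc 2 q, (q+1) := Finset.sum_le_sum hb
        _ = (q - 2) * (q + 1) := by rw [Finset.sum_const, Nat.card_Ioc, smul_eq_mul]
      have hfp : fexp (q+1) = q + 1 := fexp_of_mem (by omega) ⟨i, hi⟩
      have hBpart : ∑ l ∈ Finset.Ioc (q+1) n, fexp l = (n - (q+1)) * q := by
        have hb : ∀ l ∈ Finset.Ioc (q+1) n, fexp l = q := by
          intro l hl
          rw [Finset.mem_Ioc] at hl
          have hlm : ¬ ∃ j, kseq j = l :=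
            prevIdx_greatest (k := n+1) (show prevIdx (n+1) < l by omega) (by omega)
          rw [fexp_of_not_mem (by omega) hlm]
          have h1 : q + 1 ≤ prevIdx l := prevIdx_ge (by omega) ⟨i, hi⟩
          have h2 : prevIdx l ≤ q + 1 := by
            by_contra h
            have hm := prevIdx_mem (show 3 ≤ l by omega)
            have h3 : prevIdx l ≤ l := prevIdx_le l
            exact prevIdx_greatest (show prevIdx (n+1) < prevIdx l by omega) (by omega) hm
          omega
        rw [Finset.sum_congr rfl hb, Finset.sum_const, Nat.card_Ioc, smul_eq_mul]
      rw [hfn, hsplit, hfp, hBpart]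
      obtain ⟨u, rfl⟩ : ∃ u, q = u + 5 := ⟨q - 5, by omega⟩
      obtain ⟨t, rfl⟩ : ∃ t, n = (u + 5 + 1) + t := ⟨n - (u+5+1), by omega⟩
      set A := ∑ l ∈ Finset.Ioc 2 (u+5), fexp l with hA
      rw [show u+5+1+t - (u+5+1) = t by omega, show u+5+1+t-2 = u+4+t by omega,
        show u+5+1+t-1 = u+5+t by omega, show u+5+1-1 = u+5 by omega]
      rw [show u+5-2 = u+3 by omega] at hApart
      nlinarith [hApart, h2n]

lemma fexp_one : fexp 1 = 0 := by unfold fexp; simp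

lemma ee_one : ee 1 = 0 := by
  unfold ee
  rw [Finset.Icc_self, Finset.sum_singleton, fexp_one]

lemma Mseq_one (r : ℝ) : Mseq r 1 = 1 := by
  rw [Mval, ee_one]
  simp [Nat.factorial]

lemma ratio_bound (n : ℕ) : ((n:ℝ) + 2) ^ n ≤ 4 * ((n:ℝ) + 1) ^ n := by
  have h1 : (0:ℝ) < (n:ℝ) + 1 := by positivity
  have hx : (n:ℝ) + 2 = ((n:ℝ) + 1) * (1 + 1/((n:ℝ)+1)) := by field_simp; ring
  have h2 : (1:ℝ) + 1/((n:ℝ)+1) ≤ Real.exp (1/((n:ℝ)+1)) := by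
    have := Real.add_one_le_exp (1/((n:ℝ)+1)); linarith
  have h3 : ((1:ℝ) + 1/((n:ℝ)+1)) ^ n ≤ Real.exp (1/((n:ℝ)+1)) ^ n :=
    pow_le_pow_left₀ (by positivity) h2 n
  have h4 : Real.exp (1/((n:ℝ)+1)) ^ n = Real.exp ((n:ℝ)/((n:ℝ)+1)) := by
    rw [← Real.exp_nat_mul]
    congr 1
    field_simp
  have h5 : Real.exp ((n:ℝ)/((n:ℝ)+1)) ≤ Real.exp 1 := by
    rw [Real.exp_le_exp, div_le_one h1]
    linarith
  have h6 : Real.exp 1 ≤ 4 := le_of_lt (lt_trans Real.exp_one_lt_d9 (by norm_num))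
  calc ((n:ℝ) + 2) ^ n = ((n:ℝ)+1)^n * (1 + 1/((n:ℝ)+1))^n := by rw [hx, mul_pow]
  _ ≤ ((n:ℝ)+1)^n * 4 := by
      apply mul_le_mul_of_nonneg_left _ (by positivity)
      calc ((1:ℝ) + 1/((n:ℝ)+1)) ^ n ≤ Real.exp (1/((n:ℝ)+1)) ^ n := h3
      _ = Real.exp ((n:ℝ)/((n:ℝ)+1)) := h4
      _ ≤ Real.exp 1 := h5
      _ ≤ 4 := h6
  _ = 4 * ((n:ℝ)+1)^n := by ring

lemma N1 (n : ℕ) (hn : 3 ≤ n) : ((n:ℝ) + 1) ^ (n - 1) ≤ 4 ^ (n - 2) * (n.factorial : ℝ) := by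
  induction n, hn using Nat.le_induction with
  | base => norm_num [Nat.factorial]
  | succ n hn3 ih =>
    have e1 : n + 1 - 1 = (n - 1) + 1 := by omega
    have e2 : n + 1 - 2 = (n - 2) + 1 := by omega
    have e3 : (n:ℝ) - 1 + 1 = n := by push_cast; ring
    rw [e1, e2]
    have hfact : ((n+1).factorial : ℝ) = ((n:ℝ) + 1) * (n.factorial : ℝ) := by
      rw [Nat.factorial_succ]; push_cast; ring
    have step1 : (((n+1):ℕ):ℝ) + 1 = (n:ℝ) + 2 := by push_cast; ring
    rw [step1]
    have hpow : ((n:ℝ) + 2) ^ ((n-1)+1) ≤ (4 * ((n:ℝ)+1)^((n-1)+1)) := by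
      have := ratio_bound n
      have hexp : (n - 1) + 1 = n := by omega
      rw [hexp]
      exact this
    calc ((n:ℝ) + 2) ^ ((n-1)+1) ≤ 4 * ((n:ℝ)+1) ^ ((n-1)+1) := hpow
    _ = 4 * (((n:ℝ)+1) ^ (n-1) * ((n:ℝ)+1)) := by rw [pow_succ]
    _ ≤ 4 * ((4 ^ (n - 2) * (n.factorial : ℝ)) * ((n:ℝ)+1)) := by
        apply mul_le_mul_of_nonneg_left _ (by norm_num)
        apply mul_le_mul_of_nonneg_right ih (by positivity)
    _ = 4 ^ ((n-2)+1) * (((n:ℝ)+1) * (n.factorial:ℝ)) := by rw [pow_succ]; ring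
    _ = 4 ^ ((n-2)+1) * ((n+1).factorial : ℝ) := by rw [hfact]

lemma Rrel_succ {r : ℝ} (hr : 4 ≤ r) (n : ℕ) (h2 : 2 ≤ n) (h4 : n ≠ 4) :
    Mseq r n ^ n ≤ Mseq r (n+1) ^ (n-1) := by
  have hr0 : (0:ℝ) < r := by linarith
  have hfacpos : ∀ m : ℕ, (0:ℝ) < (m.factorial : ℝ) := fun m => by exact_mod_cast m.factorial_pos
  rcases eq_or_lt_of_le h2 with rfl | h3
  · -- n = 2
    rw [Mval, Mval, ee_two, ee_three]
    have : ((2+1).factorial : ℝ) = 6 := by norm_num [Nat.factorial]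
    rw [this]
    have : ((Nat.factorial 2) : ℝ) = 2 := by norm_num [Nat.factorial]
    rw [this]
    have hr3 : (64:ℝ) ≤ r ^ 3 := by
      calc (64:ℝ) = 4 ^ 3 := by norm_num
      _ ≤ r ^ 3 := pow_le_pow_left₀ (by norm_num) hr 3
    rw [pow_zero]
    norm_num
    nlinarith
  · have hn3 : 3 ≤ n := h3
    have hkey := key n hn3 h4
    obtain ⟨g, hg⟩ : ∃ g, (n-1) * fexp (n+1) = ee n + g := ⟨(n-1) * fexp (n+1) - ee n, by omega⟩
    have hg2 : n - 2 ≤ g := by omega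
    have hee : ee (n+1) = ee n + fexp (n+1) := ee_succ n (by omega)
    rw [Mval, Mval, hee]
    rw [div_pow, div_pow]
    rw [div_le_div_iff₀ (by positivity) (by positivity)]
    rw [← pow_mul, ← pow_mul]
    have hexp : (ee n + fexp (n+1)) * (n - 1) = ee n * n + g := by
      have h1 : (ee n + fexp (n+1)) * (n-1) = ee n * (n-1) + (n-1) * fexp (n+1) := by ring
      rw [h1, hg]
      have : ee n * (n-1) + ee n = ee n * n := by
        rw [← Nat.mul_succ]
        congr 1
        omega
      omega
    rw [hexp, pow_add]
    have hfs : (((n+1).factorial : ℕ) : ℝ) ^ (n-1) = ((n:ℝ)+1) ^ (n-1) * ((n.factorial : ℕ):ℝ) ^ (n-1) := by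
      rw [Nat.factorial_succ]
      push_cast
      rw [mul_pow]
    rw [hfs]
    have hfn : ((n.factorial : ℕ):ℝ) ^ n = ((n.factorial : ℕ):ℝ) ^ (n-1) * ((n.factorial : ℕ):ℝ) := by
      rw [← pow_succ]
      congr 1
      omega
    rw [hfn]
    have hmain : ((n:ℝ)+1) ^ (n-1) ≤ r ^ g * ((n.factorial : ℕ):ℝ) := by
      calc ((n:ℝ)+1) ^ (n-1) ≤ 4 ^ (n-2) * ((n.factorial:ℕ):ℝ) := N1 n hn3
      _ ≤ 4 ^ g * ((n.factorial:ℕ):ℝ) := by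
          apply mul_le_mul_of_nonneg_right _ (le_of_lt (hfacpos n))
          exact pow_le_pow_right₀ (by norm_num) hg2
      _ ≤ r ^ g * ((n.factorial:ℕ):ℝ) := by
          apply mul_le_mul_of_nonneg_right _ (le_of_lt (hfacpos n))
          exact pow_le_pow_left₀ (by norm_num) hr g
    calc r ^ (ee n * n) * (((n:ℝ)+1) ^ (n-1) * ((n.factorial : ℕ):ℝ) ^ (n-1))
        ≤ r ^ (ee n * n) * ((r ^ g * ((n.factorial : ℕ):ℝ)) * ((n.factorial : ℕ):ℝ) ^ (n-1)) := by
          apply mul_le_mul_of_nonneg_left _ (by positivity)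
          apply mul_le_mul_of_nonneg_right hmain (by positivity)
    _ = r ^ (ee n * n) * r ^ g * (((n.factorial : ℕ):ℝ) ^ (n-1) * ((n.factorial : ℕ):ℝ)) := by ring

lemma Rrel_trans {r : ℝ} (hr0 : 0 < r) {j m p : ℕ} (hm : 2 ≤ m)
    (h1 : Mseq r j ^ (m-1) ≤ Mseq r m ^ (j-1))
    (h2 : Mseq r m ^ (p-1) ≤ Mseq r p ^ (m-1)) :
    Mseq r j ^ (p-1) ≤ Mseq r p ^ (j-1) := by
  have hmj := Mpos hr0 j
  have hmm := Mpos hr0 m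
  have hmp := Mpos hr0 p
  apply le_of_pow_le_pow_left₀ (show m - 1 ≠ 0 by omega) (by positivity)
  calc (Mseq r j ^ (p-1)) ^ (m-1) = (Mseq r j ^ (m-1)) ^ (p-1) := by
        rw [← pow_mul, ← pow_mul, Nat.mul_comm]
  _ ≤ (Mseq r m ^ (j-1)) ^ (p-1) := pow_le_pow_left₀ (by positivity) h1 _
  _ = (Mseq r m ^ (p-1)) ^ (j-1) := by rw [← pow_mul, ← pow_mul, Nat.mul_comm]
  _ ≤ (Mseq r p ^ (m-1)) ^ (j-1) := pow_le_pow_left₀ (by positivity) h2 _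
  _ = (Mseq r p ^ (j-1)) ^ (m-1) := by rw [← pow_mul, ← pow_mul, Nat.mul_comm]

lemma rpow2 {r : ℝ} (hr : 4 ≤ r) : (16:ℝ) ≤ r ^ 2 := by nlinarith

lemma rpow14 {r : ℝ} (hr : 4 ≤ r) : (268435456:ℝ) ≤ r ^ 14 := by
  calc (268435456:ℝ) = 4 ^ 14 := by norm_num
  _ ≤ r ^ 14 := pow_le_pow_left₀ (by norm_num) hr 14

lemma fact5 : ((Nat.factorial 5 : ℕ) : ℝ) = 120 := by norm_num [Nat.factorial]
lemma fact6 : ((Nat.factorial 6 : ℕ) : ℝ) = 720 := by norm_num [Nat.factorial]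
lemma fact4 : ((Nat.factorial 4 : ℕ) : ℝ) = 24 := by norm_num [Nat.factorial]
lemma fact3 : ((Nat.factorial 3 : ℕ) : ℝ) = 6 := by norm_num [Nat.factorial]
lemma fact2 : ((Nat.factorial 2 : ℕ) : ℝ) = 2 := by norm_num [Nat.factorial]

lemma Rrel_3_5 {r : ℝ} (hr : 4 ≤ r) : Mseq r 3 ^ (5-1) ≤ Mseq r 5 ^ (3-1) := by
  have hr0 : (0:ℝ) < r := by linarith
  rw [Mval, Mval, ee_three, ee_five, fact3, fact5]
  rw [div_pow, div_pow, div_le_div_iff₀ (by norm_num) (by norm_num)]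
  rw [← pow_mul, ← pow_mul]
  norm_num
  have h1 : r ^ 14 = r ^ 12 * r ^ 2 := by rw [← pow_add]
  have h2 := rpow2 hr
  have h3 : (0:ℝ) < r ^ 12 := by positivity
  nlinarith

lemma Rrel_4_6 {r : ℝ} (hr : 4 ≤ r) : Mseq r 4 ^ (6-1) ≤ Mseq r 6 ^ (4-1) := by
  have hr0 : (0:ℝ) < r := by linarith
  rw [Mval, Mval, ee_four, ee_six, fact4, fact6]
  rw [div_pow, div_pow, div_le_div_iff₀ (by norm_num) (by norm_num)]
  rw [← pow_mul, ← pow_mul]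
  norm_num
  have h1 : r ^ 39 = r ^ 25 * r ^ 14 := by rw [← pow_add]
  have h2 := rpow14 hr
  have h3 : (0:ℝ) < r ^ 25 := by positivity
  nlinarith

lemma M2_M4_le_M5 {r : ℝ} (hr : 4 ≤ r) : Mseq r 2 * Mseq r 4 ≤ Mseq r 5 := by
  have hr0 : (0:ℝ) < r := by linarith
  rw [Mval, Mval, Mval, ee_two, ee_four, ee_five, fact2, fact4, fact5]
  rw [pow_zero]
  rw [div_mul_div_comm, div_le_div_iff₀ (by norm_num) (by norm_num)]
  have h1 : r ^ 7 = r ^ 5 * r ^ 2 := by rw [← pow_add]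
  have h2 := rpow2 hr
  have h3 : (0:ℝ) < r ^ 5 := by positivity
  nlinarith

lemma Rrel_all {r : ℝ} (hr : 4 ≤ r) :
    ∀ m j, 2 ≤ j → j ≤ m → ¬(j = 4 ∧ m = 5) → Mseq r j ^ (m-1) ≤ Mseq r m ^ (j-1) := by
  have hr0 : (0:ℝ) < r := by linarith
  intro m
  induction m using Nat.strong_induction_on with
  | _ m ih =>
    intro j hj2 hjm hex
    rcases eq_or_lt_of_le hjm with rfl | hlt
    · exact le_rfl
    · by_cases hm5 : m = 5
      · subst hm5
        have hj4 : j ≠ 4 := fun h => hex ⟨h, rfl⟩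
        interval_cases j
        · -- j = 2 : compose 2→3 and 3→5
          have r1 : Mseq r 2 ^ (3-1) ≤ Mseq r 3 ^ (2-1) := by
            have := Rrel_succ hr 2 (by omega) (by omega)
            simpa using this
          exact Rrel_trans hr0 (by omega) r1 (Rrel_3_5 hr)
        · exact Rrel_3_5 hr
        · exact absurd rfl hj4
      · by_cases h46 : j = 4 ∧ m = 6
        · obtain ⟨rfl, rfl⟩ := h46
          exact Rrel_4_6 hr
        · have hm1 : j ≤ m - 1 := by omega
          have hne : ¬(j = 4 ∧ m - 1 = 5) := fun ⟨a, b⟩ => h46 ⟨a, by omega⟩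
          have r1 := ih (m-1) (by omega) j hj2 hm1 hne
          have r2 : Mseq r (m-1) ^ (m-1) ≤ Mseq r m ^ (m-1-1) := by
            have h := Rrel_succ hr (m-1) (by omega) (by omega)
            have e1 : m - 1 + 1 = m := by omega
            rw [e1] at h
            exact h
          have r2' : Mseq r (m-1) ^ (m-1) ≤ Mseq r m ^ ((m-1)-1) := r2
          -- transitivity j ≤ m-1 ≤ m
          have := Rrel_trans hr0 (show 2 ≤ m - 1 by omega) r1
            (show Mseq r (m-1) ^ (m-1) ≤ Mseq r m ^ ((m-1)-1) from r2')
          exact this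

theorem example_sequence_almost_logconvex (r : ℝ) (hr : 4 ≤ r) :
    ∀ j k : ℕ, 1 ≤ j → 1 ≤ k →
      Mseq r j * Mseq r k ≤ Mseq r 1 * Mseq r (j + k - 1) := by
  have hr0 : (0:ℝ) < r := by linarith
  intro j k hj hk
  rw [Mseq_one, one_mul]
  rcases eq_or_lt_of_le hj with rfl | hj2
  · rw [show 1 + k - 1 = k by omega, Mseq_one, one_mul]
  · rcases eq_or_lt_of_le hk with rfl | hk2
    · rw [show j + 1 - 1 = j by omega, Mseq_one, mul_one]
    · set m := j + k - 1 with hm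
      have hj2' : 2 ≤ j := hj2
      have hk2' : 2 ≤ k := hk2
      have hjm : j ≤ m := by omega
      have hkm : k ≤ m := by omega
      have hm2 : 2 ≤ m := by omega
      by_cases hsp : (j = 4 ∧ m = 5) ∨ (k = 4 ∧ m = 5)
      · -- one of them is the special pair; then the other is 2
        rcases hsp with ⟨rfl, hm5⟩ | ⟨rfl, hm5⟩
        · have hk2 : k = 2 := by omega
          subst hk2
          rw [hm, show 4 + 2 - 1 = 5 by omega]
          rw [mul_comm]
          exact M2_M4_le_M5 hr
        · have hj2'' : j = 2 := by omega
          subst hj2''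
          rw [hm, show 2 + 4 - 1 = 5 by omega]
          exact M2_M4_le_M5 hr
      · push_neg at hsp
        have h1 : Mseq r j ^ (m-1) ≤ Mseq r m ^ (j-1) :=
          Rrel_all hr m j hj2' hjm (fun ⟨a, b⟩ => hsp.1 a b)
        have h2 : Mseq r k ^ (m-1) ≤ Mseq r m ^ (k-1) :=
          Rrel_all hr m k hk2' hkm (fun ⟨a, b⟩ => hsp.2 a b)
        have hpow : (Mseq r j * Mseq r k) ^ (m-1) ≤ Mseq r m ^ (m-1) := by
          rw [mul_pow]
          calc Mseq r j ^ (m-1) * Mseq r k ^ (m-1)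
              ≤ Mseq r m ^ (j-1) * Mseq r m ^ (k-1) := by
                exact mul_le_mul h1 h2 (pow_nonneg (Mpos hr0 k).le _) (pow_nonneg (Mpos hr0 m).le _)
          _ = Mseq r m ^ ((j-1) + (k-1)) := by rw [← pow_add]
          _ = Mseq r m ^ (m-1) := by congr 1; omega
        have := le_of_pow_le_pow_left₀ (show m - 1 ≠ 0 by omega)
          (le_of_lt (Mpos hr0 m)) hpow
        exact this
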